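/- Let a, b be real numbers with a > 0, b > 0 and 100·a² < 273·b. Then the polynomial Q₁′(z) = 13z¹² + 10a·z⁹ + 7b·z⁶ + 4ab·z³, which is the derivative of Q₁(z) = z⁴·(z³ + a)·(z⁶ + b), has exactly one nonzero real root; this root is negative and simple (i.e. the derivative of Q₁′ does not vanish at it). -/

import Mathlib

noncomputable section

/-- For `a, b > 0` with `100a² < 273b`, the polynomial
`Q₁′(z) = 13z¹² + 10a·z⁹ + 7b·z⁶ + 4ab·z³` — which is the derivative of
`Q₁(z) = z⁴(z³+a)(z⁶+b)` — has exactly one nonzero real root; it is negative and simple. -/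
theorem stmt19 (a b : ℝ) (ha : 0 < a) (hb : 0 < b) (hab : 100 * a ^ 2 < 273 * b) :
    (∀ z : ℝ, deriv (fun w : ℝ => w ^ 4 * (w ^ 3 + a) * (w ^ 6 + b)) z =
        13 * z ^ 12 + 10 * a * z ^ 9 + 7 * b * z ^ 6 + 4 * a * b * z ^ 3) ∧
    ∃ z₀ : ℝ, z₀ < 0 ∧
      13 * z₀ ^ 12 + 10 * a * z₀ ^ 9 + 7 * b * z₀ ^ 6 + 4 * a * b * z₀ ^ 3 = 0 ∧
      deriv (fun z : ℝ =>
        13 * z ^ 12 + 10 * a * z ^ 9 + 7 * b * z ^ 6 + 4 * a * b * z ^ 3) z₀ ≠ 0 ∧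
      ∀ z : ℝ, z ≠ 0 →
        13 * z ^ 12 + 10 * a * z ^ 9 + 7 * b * z ^ 6 + 4 * a * b * z ^ 3 = 0 → z = z₀ := by
  -- the cubic S(t) = 13t³ + 10a t² + 7b t + 4ab
  set S : ℝ → ℝ := fun t => 13 * t ^ 3 + 10 * a * t ^ 2 + 7 * b * t + 4 * a * b with hSdef
  -- S has everywhere positive derivative
  have hSderiv : ∀ t : ℝ, HasDerivAt S (39 * t ^ 2 + 20 * a * t + 7 * b) t := by
    intro t
    have h :=
      ((((hasDerivAt_pow 3 t).const_mul (13 : ℝ)).add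
        ((hasDerivAt_pow 2 t).const_mul (10 * a))).add
        ((hasDerivAt_id t).const_mul (7 * b))).add_const (4 * a * b)
    convert h using 1
    all_goals first | rfl | (push_cast; ring)
  have hS'pos : ∀ t : ℝ, 0 < 39 * t ^ 2 + 20 * a * t + 7 * b := by
    intro t
    nlinarith [sq_nonneg (39 * t + 10 * a)]
  have hSmono : StrictMono S := by
    apply strictMono_of_deriv_pos
    intro t
    rw [(hSderiv t).deriv]
    exact hS'pos t
  -- existence of a root of S via IVT
  have hM : S (-(a + b + 1)) < 0 := by
    have h1 : (1 : ℝ) ≤ a + b + 1 := by nlinarith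
    have h2 : a ≤ a + b + 1 := by nlinarith
    have h3 : b ≤ a + b + 1 := by nlinarith
    simp only [hSdef]
    nlinarith [mul_pos (mul_pos ha hb) (by nlinarith : (0:ℝ) < a + b + 1),
      sq_nonneg (a + b + 1), mul_le_mul_of_nonneg_right h2 (sq_nonneg (a + b + 1))]
  have hS0 : 0 < S 0 := by simp only [hSdef]; nlinarith
  have hScont : ContinuousOn S (Set.Icc (-(a + b + 1)) 0) := by
    apply Continuous.continuousOn
    exact Continuous.add (Continuous.add (Continuous.add (by continuity) (by continuity))
      (by continuity)) continuous_const
  obtain ⟨t₀, ht₀mem, ht₀⟩ :=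
    intermediate_value_Icc (by nlinarith : -(a + b + 1) ≤ (0:ℝ)) hScont
      (Set.mem_Icc.mpr ⟨le_of_lt hM, le_of_lt hS0⟩)
  have ht₀0 : S t₀ = 0 := ht₀
  have ht₀neg : t₀ < 0 := by
    rcases lt_or_eq_of_le ht₀mem.2 with h | h
    · exact h
    · rw [h] at ht₀0; linarith
  -- z₀ := the real cube root of t₀
  set z₀ : ℝ := -((-t₀) ^ ((1:ℝ)/3)) with hz₀def
  have hnt₀ : (0:ℝ) < -t₀ := by linarith
  have hz₀neg : z₀ < 0 := by
    have : 0 < (-t₀) ^ ((1:ℝ)/3) := Real.rpow_pos_of_pos hnt₀ _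
    simp only [hz₀def]; linarith
  have hz₀cube : z₀ ^ 3 = t₀ := by
    have h : ((-t₀) ^ ((1:ℝ)/3)) ^ (3:ℕ) = -t₀ := by
      rw [← Real.rpow_natCast ((-t₀) ^ ((1:ℝ)/3)) 3, ← Real.rpow_mul (le_of_lt hnt₀)]
      norm_num
    simp only [hz₀def]
    have : (-((-t₀) ^ ((1:ℝ)/3))) ^ 3 = -(((-t₀) ^ ((1:ℝ)/3)) ^ (3:ℕ)) := by ring
    rw [this, h]; ring
  -- cube is strictly monotone, hence injective
  have hcube : StrictMono (fun x : ℝ => x ^ 3) := Odd.strictMono_pow (by decide)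
  refine ⟨?_, z₀, hz₀neg, ?_, ?_, ?_⟩
  · -- derivative formula
    intro z
    have h :=
      (((hasDerivAt_pow 4 z).mul ((hasDerivAt_pow 3 z).add_const a)).mul
        ((hasDerivAt_pow 6 z).add_const b))
    have h2 : deriv (fun w : ℝ => w ^ 4 * (w ^ 3 + a) * (w ^ 6 + b)) z =
        (↑4 * z ^ 3 * (z ^ 3 + a) + z ^ 4 * (↑3 * z ^ 2)) * (z ^ 6 + b) +
          z ^ 4 * (z ^ 3 + a) * (↑6 * z ^ 5) := h.deriv
    rw [h2]; push_cast; ring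
  · -- z₀ is a root
    have h12 : z₀ ^ 12 = t₀ ^ 4 := by rw [← hz₀cube]; ring
    have h9 : z₀ ^ 9 = t₀ ^ 3 := by rw [← hz₀cube]; ring
    have h6 : z₀ ^ 6 = t₀ ^ 2 := by rw [← hz₀cube]; ring
    rw [h12, h9, h6, hz₀cube]
    have : t₀ * S t₀ = 0 := by rw [ht₀0]; ring
    simp only [hSdef] at this
    nlinarith [this]
  · -- simplicity
    have h :=
      (((((hasDerivAt_pow 12 z₀).const_mul (13:ℝ)).add
        ((hasDerivAt_pow 9 z₀).const_mul (10 * a))).add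
        ((hasDerivAt_pow 6 z₀).const_mul (7 * b))).add
        ((hasDerivAt_pow 3 z₀).const_mul (4 * a * b)))
    have hd : deriv (fun z : ℝ =>
        13 * z ^ 12 + 10 * a * z ^ 9 + 7 * b * z ^ 6 + 4 * a * b * z ^ 3) z₀ =
        156 * z₀ ^ 11 + 90 * a * z₀ ^ 8 + 42 * b * z₀ ^ 5 + 12 * a * b * z₀ ^ 2 := by
      refine h.deriv.trans ?_; push_cast; ring
    rw [hd]
    -- value = 3 z₀⁵ S'(t₀) + 3 z₀² S(t₀) = 3 z₀⁵ S'(t₀) < 0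
    have hid : 156 * z₀ ^ 11 + 90 * a * z₀ ^ 8 + 42 * b * z₀ ^ 5 + 12 * a * b * z₀ ^ 2 =
        3 * z₀ ^ 5 * (39 * t₀ ^ 2 + 20 * a * t₀ + 7 * b) +
        3 * z₀ ^ 2 * (13 * t₀ ^ 3 + 10 * a * t₀ ^ 2 + 7 * b * t₀ + 4 * a * b) := by
      rw [← hz₀cube]; ring
    have hSval : 13 * t₀ ^ 3 + 10 * a * t₀ ^ 2 + 7 * b * t₀ + 4 * a * b = 0 := ht₀0
    rw [hid, hSval]
    have hz5 : z₀ ^ 5 < 0 := by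
      have := Odd.pow_neg (by decide : Odd 5) hz₀neg
      exact this
    have := mul_pos (mul_pos (by norm_num : (0:ℝ) < 3) (neg_pos.mpr hz5)) (hS'pos t₀)
    intro hcontra
    nlinarith [this]
  · -- uniqueness
    intro z hz hzeq
    have hz3 : z ^ 3 ≠ 0 := pow_ne_zero _ hz
    have hSz : S (z ^ 3) = 0 := by
      have h : z ^ 3 * S (z ^ 3) = 0 := by
        simp only [hSdef]
        nlinarith [hzeq]
      rcases mul_eq_zero.mp h with h' | h'
      · exact absurd h' hz3
      · exact h'
    have : z ^ 3 = t₀ := hSmono.injective (by rw [hSz, ht₀0])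
    have : z ^ 3 = z₀ ^ 3 := by rw [this, hz₀cube]
    exact hcube.injective this
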